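/- Let t0 > 0, let φ : [t0,∞) → ℝ be of class C² and ψ : [t0,∞) → ℝ be of class C¹. Assume φ''(t) ≥ 0 for every t ≥ t0, and that there exist positive real numbers φ0 and Ψ0 such that |φ'(t)| ≥ φ0 and |ψ'(t)| ≤ Ψ0/t for every t ≥ t0. Then the limit as t → +∞ of ∫_{t0}^t cos(φ(s))·sin(ψ(s))/s ds exists and is a real number. -/

import Mathlib

open Real Set Filter MeasureTheory intervalIntegral

theorem oscillating_integral_converges
    (t0 φ0 Ψ0 : ℝ) (ht0 : 0 < t0) (hφ0 : 0 < φ0) (hΨ0 : 0 < Ψ0)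
    (φ φ' φ'' ψ ψ' : ℝ → ℝ)
    (hφd : ∀ t ∈ Ici t0, HasDerivAt φ (φ' t) t)
    (hφd2 : ∀ t ∈ Ici t0, HasDerivAt φ' (φ'' t) t)
    (hφ''c : ContinuousOn φ'' (Ici t0))
    (hψd : ∀ t ∈ Ici t0, HasDerivAt ψ (ψ' t) t)
    (hψ'c : ContinuousOn ψ' (Ici t0))
    (hconv : ∀ t ∈ Ici t0, 0 ≤ φ'' t)
    (hφ'lb : ∀ t ∈ Ici t0, φ0 ≤ |φ' t|)
    (hψ'ub : ∀ t ∈ Ici t0, |ψ' t| ≤ Ψ0 / t) :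
    ∃ L : ℝ, Tendsto (fun t => ∫ s in t0..t, Real.cos (φ s) * Real.sin (ψ s) / s)
      atTop (nhds L) := by
  have hspos : ∀ s ∈ Ici t0, (0:ℝ) < s := fun s hs => lt_of_lt_of_le ht0 hs
  have hsne : ∀ s ∈ Ici t0, (s:ℝ) ≠ 0 := fun s hs => (hspos s hs).ne'
  have hφ'ne : ∀ s ∈ Ici t0, φ' s ≠ 0 := by
    intro s hs h
    have := hφ'lb s hs
    rw [h, abs_zero] at this
    linarith
  have hφc : ContinuousOn φ (Ici t0) :=
    fun s hs => (hφd s hs).continuousAt.continuousWithinAt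
  have hψc : ContinuousOn ψ (Ici t0) :=
    fun s hs => (hψd s hs).continuousAt.continuousWithinAt
  have hφ'c : ContinuousOn φ' (Ici t0) :=
    fun s hs => (hφd2 s hs).continuousAt.continuousWithinAt
  set f : ℝ → ℝ := fun s => Real.cos (φ s) * Real.sin (ψ s) / s with hfdef
  have hfc : ContinuousOn f (Ici t0) :=
    ((Real.continuous_cos.comp_continuousOn hφc).mul
      (Real.continuous_sin.comp_continuousOn hψc)).div continuousOn_id hsne
  -- auxiliary functions
  set u : ℝ → ℝ := fun s => s * φ' s with hudef
  set u' : ℝ → ℝ := fun s => φ' s + s * φ'' s with hu'def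
  set g : ℝ → ℝ := fun s => Real.sin (ψ s) / u s with hgdef
  set g' : ℝ → ℝ :=
    fun s => (Real.cos (ψ s) * ψ' s * u s - Real.sin (ψ s) * u' s) / (u s) ^ 2 with hg'def
  set h : ℝ → ℝ := fun s => Real.sin (φ s) * g s with hhdef
  set h' : ℝ → ℝ := fun s => Real.cos (φ s) * φ' s * g s + Real.sin (φ s) * g' s with hh'def
  have hune : ∀ s ∈ Ici t0, u s ≠ 0 := fun s hs => mul_ne_zero (hsne s hs) (hφ'ne s hs)
  have hud : ∀ s ∈ Ici t0, HasDerivAt u (u' s) s := by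
    intro s hs
    have := (hasDerivAt_id' s).mul (hφd2 s hs)
    rw [one_mul] at this
    exact this
  have hgd : ∀ s ∈ Ici t0, HasDerivAt g (g' s) s := by
    intro s hs
    exact ((hψd s hs).sin).div (hud s hs) (hune s hs)
  have hhd : ∀ s ∈ Ici t0, HasDerivAt h (h' s) s := by
    intro s hs
    exact ((hφd s hs).sin).mul (hgd s hs)
  -- continuity of the pieces on Ici t0
  have huc : ContinuousOn u (Ici t0) := continuousOn_id.mul hφ'c
  have hu'c : ContinuousOn u' (Ici t0) := hφ'c.add (continuousOn_id.mul hφ''c)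
  have hgc : ContinuousOn g (Ici t0) :=
    (Real.continuous_sin.comp_continuousOn hψc).div huc hune
  have hg'c : ContinuousOn g' (Ici t0) :=
    ((((Real.continuous_cos.comp_continuousOn hψc).mul hψ'c).mul huc).sub
      ((Real.continuous_sin.comp_continuousOn hψc).mul hu'c)).div (huc.pow 2)
      (fun s hs => pow_ne_zero _ (hune s hs))
  have hh'c : ContinuousOn h' (Ici t0) :=
    (((Real.continuous_cos.comp_continuousOn hφc).mul hφ'c).mul hgc).add
      ((Real.continuous_sin.comp_continuousOn hφc).mul hg'c)
  -- decomposition of f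
  have hfh : ∀ s ∈ Ici t0, f s = h' s - Real.sin (φ s) * g' s := by
    intro s hs
    have h1 := hsne s hs
    have h2 := hφ'ne s hs
    have e : h' s - Real.sin (φ s) * g' s = Real.cos (φ s) * φ' s * g s := by
      simp only [hh'def]; ring
    rw [e]
    simp only [hfdef, hgdef, hudef]
    field_simp
  -- bound on boundary term
  have hhb : ∀ a, 0 < a → ∀ s ∈ Ici t0, a ≤ s → |h s| ≤ 1 / (a * φ0) := by
    intro a ha s hs has
    have h2 : φ0 ≤ |φ' s| := hφ'lb s hs
    have hsp : 0 < s := hspos s hs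
    have hus : a * φ0 ≤ |u s| := by
      simp only [hudef, abs_mul, abs_of_pos hsp]
      exact mul_le_mul has h2 hφ0.le hsp.le
    have huspos : 0 < |u s| := lt_of_lt_of_le (mul_pos ha hφ0) hus
    have : |h s| ≤ 1 / |u s| := by
      simp only [hhdef, hgdef]
      rw [abs_mul, abs_div]
      calc |Real.sin (φ s)| * (|Real.sin (ψ s)| / |u s|)
          ≤ 1 * (1 / |u s|) := by
            gcongr
            · exact abs_sin_le_one _
            · exact abs_sin_le_one _
        _ = 1 / |u s| := by ring
    refine this.trans ?_
    exact one_div_le_one_div_of_le (mul_pos ha hφ0) hus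
  -- the key decay bound
  have key : ∀ a b : ℝ, t0 ≤ a → a ≤ b →
      |∫ s in a..b, f s| ≤ ((Ψ0 + 5) / φ0) / a := by
    intro a b hta hab
    have ha0 : 0 < a := lt_of_lt_of_le ht0 hta
    have hsub : uIcc a b ⊆ Ici t0 := by
      rw [uIcc_of_le hab]
      exact fun x hx => le_trans hta hx.1
    -- FTC for h
    have hint1 : ∫ s in a..b, h' s = h b - h a :=
      integral_eq_sub_of_hasDerivAt (fun s hs => hhd s (hsub hs))
        ((hh'c.mono hsub).intervalIntegrable)
    have hig' : IntervalIntegrable (fun s => Real.sin (φ s) * g' s) volume a b :=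
      (((Real.continuous_sin.comp_continuousOn hφc).mul hg'c).mono hsub).intervalIntegrable
    have hih' : IntervalIntegrable h' volume a b := (hh'c.mono hsub).intervalIntegrable
    have hsplit : ∫ s in a..b, f s = (h b - h a) - ∫ s in a..b, Real.sin (φ s) * g' s := by
      rw [← hint1, ← intervalIntegral.integral_sub hih' hig']
      apply intervalIntegral.integral_congr
      intro s hs
      exact hfh s (hsub hs)
    -- the comparison function M and antiderivative Q
    set M : ℝ → ℝ := fun s => (Ψ0 + 1) / φ0 / s ^ 2 + φ'' s / (φ' s) ^ 2 / a with hMdef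
    set Q : ℝ → ℝ := fun s => -((Ψ0 + 1) / φ0 / s) - (φ' s)⁻¹ / a with hQdef
    have hQd : ∀ s ∈ Ici t0, HasDerivAt Q (M s) s := by
      intro s hs
      have h1 := hsne s hs
      have h2 := hφ'ne s hs
      have d1 := ((hasDerivAt_inv h1).const_mul ((Ψ0 + 1) / φ0)).neg
      have d2 := (((hφd2 s hs).inv h2).div_const a).neg
      have hsum := d1.add d2
      have heq : Q = fun x : ℝ => -((Ψ0 + 1) / φ0 * x⁻¹) + -((φ' x)⁻¹ / a) := by
        funext x; simp only [hQdef]; ring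
      rw [heq]
      refine hsum.congr_deriv ?_
      simp only [hMdef]
      ring
    have hMc : ContinuousOn M (Ici t0) := by
      apply ContinuousOn.add
      · exact (continuousOn_const.div (continuousOn_id.pow 2)
          (fun s hs => pow_ne_zero _ (hsne s hs)))
      · exact (hφ''c.div (hφ'c.pow 2) (fun s hs => pow_ne_zero _ (hφ'ne s hs))).div_const a
    have hiM : IntervalIntegrable M volume a b := (hMc.mono hsub).intervalIntegrable
    have hintM : ∫ s in a..b, M s = Q b - Q a :=
      integral_eq_sub_of_hasDerivAt (fun s hs => hQd s (hsub hs)) hiM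
    -- pointwise bound
    have hbound : ∀ s ∈ Set.uIoc a b, |Real.sin (φ s) * g' s| ≤ M s := by
      intro s hs
      rw [uIoc_of_le hab] at hs
      have hs' : s ∈ Ici t0 := le_trans hta hs.1.le
      have hsp : 0 < s := hspos s hs'
      have hA : φ0 ≤ |φ' s| := hφ'lb s hs'
      have hA0 : (0:ℝ) < |φ' s| := lt_of_lt_of_le hφ0 hA
      have hψ'b : |ψ' s| ≤ Ψ0 / s := hψ'ub s hs'
      have hφ''0 : 0 ≤ φ'' s := hconv s hs'
      have has : a ≤ s := hs.1.le
      have husq : (u s) ^ 2 = s ^ 2 * |φ' s| ^ 2 := by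
        simp only [hudef, mul_pow, sq_abs]
      have hnum : |Real.cos (ψ s) * ψ' s * u s - Real.sin (ψ s) * u' s|
          ≤ Ψ0 * |φ' s| + (|φ' s| + s * φ'' s) := by
        have t1 : |Real.cos (ψ s) * ψ' s * u s| ≤ Ψ0 * |φ' s| := by
          rw [abs_mul, abs_mul]
          have hus : |u s| = s * |φ' s| := by
            simp only [hudef, abs_mul, abs_of_pos hsp]
          rw [hus]
          calc |Real.cos (ψ s)| * |ψ' s| * (s * |φ' s|)
              ≤ 1 * (Ψ0 / s) * (s * |φ' s|) := by
                apply mul_le_mul_of_nonneg_right _ (by positivity)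
                exact mul_le_mul (abs_cos_le_one _) hψ'b (abs_nonneg _) zero_le_one
            _ = Ψ0 * |φ' s| := by field_simp
        have t2 : |Real.sin (ψ s) * u' s| ≤ |φ' s| + s * φ'' s := by
          rw [abs_mul]
          calc |Real.sin (ψ s)| * |u' s| ≤ 1 * |u' s| :=
                mul_le_mul_of_nonneg_right (abs_sin_le_one _) (abs_nonneg _)
            _ = |u' s| := by ring
            _ ≤ |φ' s| + |s * φ'' s| := abs_add_le _ _
            _ = |φ' s| + s * φ'' s := by
                rw [abs_mul, abs_of_pos hsp, abs_of_nonneg hφ''0]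
        calc |Real.cos (ψ s) * ψ' s * u s - Real.sin (ψ s) * u' s|
            ≤ |Real.cos (ψ s) * ψ' s * u s| + |Real.sin (ψ s) * u' s| := abs_sub _ _
          _ ≤ Ψ0 * |φ' s| + (|φ' s| + s * φ'' s) := add_le_add t1 t2
      have hg'b : |g' s| ≤ (Ψ0 * |φ' s| + (|φ' s| + s * φ'' s)) / (s ^ 2 * |φ' s| ^ 2) := by
        simp only [hg'def]
        rw [abs_div, abs_of_nonneg (sq_nonneg (u s)), husq]
        gcongr
      calc |Real.sin (φ s) * g' s| ≤ 1 * |g' s| := by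
            rw [abs_mul]
            exact mul_le_mul_of_nonneg_right (abs_sin_le_one _) (abs_nonneg _)
        _ = |g' s| := by ring
        _ ≤ (Ψ0 * |φ' s| + (|φ' s| + s * φ'' s)) / (s ^ 2 * |φ' s| ^ 2) := hg'b
        _ = (Ψ0 + 1) / |φ' s| / s ^ 2 + φ'' s / |φ' s| ^ 2 / s := by
            have ering : ∀ A : ℝ, A ≠ 0 →
                (Ψ0 * A + (A + s * φ'' s)) / (s ^ 2 * A ^ 2)
                  = (Ψ0 + 1) / A / s ^ 2 + φ'' s / A ^ 2 / s := by
              intro A hA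
              field_simp
              ring
            exact ering |φ' s| hA0.ne'
        _ ≤ (Ψ0 + 1) / φ0 / s ^ 2 + φ'' s / |φ' s| ^ 2 / a := by
            gcongr
        _ = M s := by simp only [hMdef, sq_abs]
    -- bound the middle integral
    have hmid : |∫ s in a..b, Real.sin (φ s) * g' s| ≤ |∫ s in a..b, M s| := by
      have := intervalIntegral.norm_integral_le_of_norm_le
        (f := fun s => Real.sin (φ s) * g' s) (g := M) (μ := volume) (a := a) (b := b)
        hab ?_ hiM
      · simpa using this.trans (le_abs_self _)
      · refine Filter.Eventually.of_forall (fun s hs => ?_)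
        rw [Real.norm_eq_abs]
        exact hbound s (by rw [uIoc_of_le hab]; exact hs)
    -- bound Q b - Q a
    have hφ'inv : ∀ s ∈ Ici t0, |(φ' s)⁻¹| ≤ 1 / φ0 := by
      intro s hs
      rw [abs_inv]
      rw [inv_eq_one_div]
      exact one_div_le_one_div_of_le hφ0 (hφ'lb s hs)
    have hQbound : |Q b - Q a| ≤ ((Ψ0 + 3) / φ0) / a := by
      have hb0 : 0 < b := lt_of_lt_of_le ha0 hab
      have hia := hφ'inv a hta
      have hib := hφ'inv b (le_trans hta hab)
      have hrw : Q b - Q a = ((Ψ0 + 1) / φ0 / a - (Ψ0 + 1) / φ0 / b)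
          + ((φ' a)⁻¹ - (φ' b)⁻¹) / a := by
        rw [hQdef]; ring
      rw [hrw]
      have e1 : |(Ψ0 + 1) / φ0 / a - (Ψ0 + 1) / φ0 / b| ≤ (Ψ0 + 1) / φ0 / a := by
        have h1 : (Ψ0 + 1) / φ0 / b ≤ (Ψ0 + 1) / φ0 / a :=
          div_le_div_of_nonneg_left (by positivity) ha0 hab
        have h2 : 0 ≤ (Ψ0 + 1) / φ0 / b := by positivity
        rw [abs_of_nonneg (by linarith)]
        linarith
      have e2 : |((φ' a)⁻¹ - (φ' b)⁻¹) / a| ≤ (2 / φ0) / a := by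
        rw [abs_div, abs_of_pos ha0]
        gcongr
        calc |(φ' a)⁻¹ - (φ' b)⁻¹| ≤ |(φ' a)⁻¹| + |(φ' b)⁻¹| := abs_sub _ _
          _ ≤ 1 / φ0 + 1 / φ0 := add_le_add hia hib
          _ = 2 / φ0 := by ring
      calc |(Ψ0 + 1) / φ0 / a - (Ψ0 + 1) / φ0 / b + ((φ' a)⁻¹ - (φ' b)⁻¹) / a|
          ≤ |(Ψ0 + 1) / φ0 / a - (Ψ0 + 1) / φ0 / b| + |((φ' a)⁻¹ - (φ' b)⁻¹) / a| :=
            abs_add_le _ _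
        _ ≤ (Ψ0 + 1) / φ0 / a + (2 / φ0) / a := add_le_add e1 e2
        _ = ((Ψ0 + 3) / φ0) / a := by ring
    -- assemble
    have hhba := hhb a ha0 a hta le_rfl
    have hhbb := hhb a ha0 b (le_trans hta hab) hab
    rw [hsplit]
    calc |h b - h a - ∫ s in a..b, Real.sin (φ s) * g' s|
        ≤ |h b - h a| + |∫ s in a..b, Real.sin (φ s) * g' s| := abs_sub _ _
      _ ≤ (|h b| + |h a|) + |∫ s in a..b, M s| :=
          add_le_add (abs_sub _ _) hmid
      _ ≤ (1 / (a * φ0) + 1 / (a * φ0)) + ((Ψ0 + 3) / φ0) / a := by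
          apply add_le_add (add_le_add hhbb hhba)
          rw [hintM]
          exact hQbound
      _ = ((Ψ0 + 5) / φ0) / a := by field_simp; ring
  -- Cauchy criterion
  set C : ℝ := (Ψ0 + 5) / φ0 with hCdef
  have hC : 0 < C := by positivity
  have hFi : ∀ x y : ℝ, t0 ≤ x → t0 ≤ y → IntervalIntegrable f volume x y := by
    intro x y hx hy
    apply ContinuousOn.intervalIntegrable
    apply hfc.mono
    intro z hz
    rcases le_total x y with hxy | hxy
    · rw [uIcc_of_le hxy] at hz; exact le_trans hx hz.1
    · rw [uIcc_of_ge hxy] at hz; exact le_trans hy hz.1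
  have hdiff : ∀ x y : ℝ, t0 ≤ x → t0 ≤ y →
      (∫ s in t0..x, f s) - (∫ s in t0..y, f s) = ∫ s in y..x, f s := by
    intro x y hx hy
    have := integral_add_adjacent_intervals (hFi t0 y le_rfl hy) (hFi y x hy hx)
    linarith [this]
  rw [← cauchy_map_iff_exists_tendsto]
  rw [Metric.cauchy_iff]
  constructor
  · exact map_neBot
  · intro ε hε
    set T : ℝ := max t0 (C / ε + t0) with hTdef
    have hTt0 : t0 ≤ T := le_max_left _ _
    have hT0 : 0 < T := lt_of_lt_of_le ht0 hTt0
    have hCT : C / T < ε := by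
      rw [div_lt_iff₀ hT0]
      have : C / ε + t0 ≤ T := le_max_right _ _
      have h2 : C / ε < T := by linarith
      calc C = ε * (C / ε) := by field_simp
        _ < ε * T := by
            apply mul_lt_mul_of_pos_left h2 hε
    refine ⟨(fun t => ∫ s in t0..t, f s) '' Ici T, image_mem_map (Ici_mem_atTop T), ?_⟩
    rintro _ ⟨x, hx, rfl⟩ _ ⟨y, hy, rfl⟩
    have hxT : t0 ≤ x := le_trans hTt0 hx
    have hyT : t0 ≤ y := le_trans hTt0 hy
    rw [Real.dist_eq, hdiff x y hxT hyT]
    rcases le_total y x with hxy | hxy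
    · calc |∫ s in y..x, f s| ≤ C / y := key y x hyT hxy
        _ ≤ C / T := div_le_div_of_nonneg_left hC.le hT0 hy
        _ < ε := hCT
    · rw [intervalIntegral.integral_symm, abs_neg]
      calc |∫ s in x..y, f s| ≤ C / x := key x y hxT hxy
        _ ≤ C / T := div_le_div_of_nonneg_left hC.le hT0 hx
        _ < ε := hCT
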